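/- Let n ≥ 1 and let φ be a linear endomorphism of the algebra μ₀ⁿ with basis e₁,…,eₙ. Then φ satisfies φ(x·y) = φ(x)·y + x·φ(y) for all x,y if and only if there exist λ₁,…,λₙ ∈ ℂ such that φ(e_i) = i·Σ_{k=i}^{n} λ_{k−i+1} e_k for all 1 ≤ i ≤ n. Consequently, the Lie algebra of derivations of μ₀ⁿ has dimension n. -/

import Mathlib

open scoped BigOperators

/-- The bilinear map on `Fin n → ℂ` determined by structure constants `c`. -/
noncomputable def sb {n : ℕ} (c : Fin n → Fin n → Fin n → ℂ) :
    (Fin n → ℂ) →ₗ[ℂ] (Fin n → ℂ) →ₗ[ℂ] (Fin n → ℂ) :=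
  LinearMap.mk₂ ℂ (fun x y k => ∑ a, ∑ b, c a b k * (x a * y b))
    (fun x x' y => by
      funext k
      simp [add_mul, mul_add, Finset.sum_add_distrib])
    (fun r x y => by
      funext k
      simp only [Pi.smul_apply, smul_eq_mul, Finset.mul_sum]
      exact Finset.sum_congr rfl fun a _ => Finset.sum_congr rfl fun b _ => by ring)
    (fun x y y' => by
      funext k
      simp [mul_add, Finset.sum_add_distrib])
    (fun r x y => by
      funext k
      simp only [Pi.smul_apply, smul_eq_mul, Finset.mul_sum]
      exact Finset.sum_congr rfl fun a _ => Finset.sum_congr rfl fun b _ => by ring)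

/-- The Lie algebra (here: submodule) of derivations of the Poisson algebra on
`Fin n → ℂ` with multiplication `m` and bracket `b`. -/
noncomputable def derivs {n : ℕ}
    (m b : (Fin n → ℂ) →ₗ[ℂ] (Fin n → ℂ) →ₗ[ℂ] (Fin n → ℂ)) :
    Submodule ℂ ((Fin n → ℂ) →ₗ[ℂ] (Fin n → ℂ)) where
  carrier := {φ | (∀ x y, φ (m x y) = m (φ x) y + m x (φ y)) ∧
      (∀ x y, φ (b x y) = b (φ x) y + b x (φ y))}
  add_mem' := by
    rintro φ ψ ⟨h1, h2⟩ ⟨g1, g2⟩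
    refine ⟨fun x y => ?_, fun x y => ?_⟩ <;>
      simp only [LinearMap.add_apply, map_add, h1, h2, g1, g2] <;> abel
  zero_mem' := by
    refine ⟨fun x y => ?_, fun x y => ?_⟩ <;> simp
  smul_mem' := by
    rintro r φ ⟨h1, h2⟩
    refine ⟨fun x y => ?_, fun x y => ?_⟩ <;>
      simp only [LinearMap.smul_apply, map_smul, h1, h2, smul_add]

/-- The multiplication of the null-filiform algebra `μ₀ⁿ`:
`e_i · e_j = e_{i+j}` if `i+j ≤ n`, and `0` if `i+j > n`. -/
noncomputable def mu0 (n : ℕ) : (Fin n → ℂ) →ₗ[ℂ] (Fin n → ℂ) →ₗ[ℂ] (Fin n → ℂ) :=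
  sb (fun a b k => if (a : ℕ) + (b : ℕ) + 1 = (k : ℕ) then 1 else 0)

namespace Stmt10Aux

variable {n : ℕ}

lemma mu0_apply (n : ℕ) (x y : Fin n → ℂ) (k : Fin n) :
    mu0 n x y k =
      ∑ a : Fin n, ∑ b : Fin n,
        (if (a : ℕ) + (b : ℕ) + 1 = (k : ℕ) then (1 : ℂ) else 0) * (x a * y b) := rfl

lemma mu0_single_right (x : Fin n → ℂ) (b m : Fin n) :
    mu0 n x (Pi.single b 1) m =
      if (b : ℕ) + 1 ≤ (m : ℕ) then
        x ⟨(m : ℕ) - ((b : ℕ) + 1), lt_of_le_of_lt (Nat.sub_le _ _) m.isLt⟩ else 0 := by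
  rw [mu0_apply]
  have h1 : ∀ a : Fin n,
      (∑ b' : Fin n, (if (a : ℕ) + (b' : ℕ) + 1 = (m : ℕ) then (1 : ℂ) else 0)
        * (x a * (Pi.single b 1 : Fin n → ℂ) b'))
        = (if (a : ℕ) + (b : ℕ) + 1 = (m : ℕ) then (1 : ℂ) else 0) * x a := by
    intro a
    rw [Finset.sum_eq_single b]
    · simp
    · intro b' _ hb'
      simp [Pi.single_apply, hb']
    · simp
  rw [Finset.sum_congr rfl fun a _ => h1 a]
  split_ifs with h
  · rw [Finset.sum_eq_single (⟨(m : ℕ) - ((b : ℕ) + 1),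
      lt_of_le_of_lt (Nat.sub_le _ _) m.isLt⟩ : Fin n)]
    · rw [if_pos (by simp only [Fin.val_mk]; omega), one_mul]
    · intro a _ ha
      rw [if_neg, zero_mul]
      intro hc
      exact ha (Fin.ext (by simp only [Fin.val_mk]; omega))
    · simp
  · apply Finset.sum_eq_zero
    intro a _
    rw [if_neg (by omega), zero_mul]

lemma mu0_single_left (y : Fin n → ℂ) (a m : Fin n) :
    mu0 n (Pi.single a 1) y m =
      if (a : ℕ) + 1 ≤ (m : ℕ) then
        y ⟨(m : ℕ) - ((a : ℕ) + 1), lt_of_le_of_lt (Nat.sub_le _ _) m.isLt⟩ else 0 := by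
  rw [mu0_apply]
  have h1 : ∀ b : Fin n,
      (∑ a' : Fin n, (if (a' : ℕ) + (b : ℕ) + 1 = (m : ℕ) then (1 : ℂ) else 0)
        * ((Pi.single a 1 : Fin n → ℂ) a' * y b))
        = (if (a : ℕ) + (b : ℕ) + 1 = (m : ℕ) then (1 : ℂ) else 0) * y b := by
    intro b
    rw [Finset.sum_eq_single a]
    · simp
    · intro a' _ ha'
      simp [Pi.single_apply, ha']
    · simp
  rw [Finset.sum_comm, Finset.sum_congr rfl fun b _ => h1 b]
  split_ifs with h
  · rw [Finset.sum_eq_single (⟨(m : ℕ) - ((a : ℕ) + 1),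
      lt_of_le_of_lt (Nat.sub_le _ _) m.isLt⟩ : Fin n)]
    · rw [if_pos (by simp only [Fin.val_mk]; omega), one_mul]
    · intro b _ hb
      rw [if_neg, zero_mul]
      intro hc
      exact hb (Fin.ext (by simp only [Fin.val_mk]; omega))
    · simp
  · apply Finset.sum_eq_zero
    intro b _
    rw [if_neg (by omega), zero_mul]

lemma mu0_single_single_apply (a b m : Fin n) :
    mu0 n (Pi.single a (1 : ℂ)) (Pi.single b 1) m =
      if (a : ℕ) + (b : ℕ) + 1 = (m : ℕ) then 1 else 0 := by
  rw [mu0_single_left]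
  by_cases h1 : (a : ℕ) + 1 ≤ (m : ℕ)
  · rw [if_pos h1, Pi.single_apply]
    have key : ((⟨(m : ℕ) - ((a : ℕ) + 1),
        lt_of_le_of_lt (Nat.sub_le _ _) m.isLt⟩ : Fin n) = b)
        ↔ ((a : ℕ) + (b : ℕ) + 1 = (m : ℕ)) := by
      rw [Fin.ext_iff]
      simp only [Fin.val_mk]
      omega
    simp only [key]
  · rw [if_neg h1, if_neg (by omega)]

lemma mu0_single_single (a b : Fin n) :
    mu0 n (Pi.single a (1 : ℂ)) (Pi.single b 1) =
      if h : (a : ℕ) + (b : ℕ) + 1 < n then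
        Pi.single (⟨(a : ℕ) + (b : ℕ) + 1, h⟩ : Fin n) 1 else 0 := by
  funext m
  rw [mu0_single_single_apply]
  by_cases h : (a : ℕ) + (b : ℕ) + 1 < n
  · rw [dif_pos h, Pi.single_apply]
    have key : (m = (⟨(a : ℕ) + (b : ℕ) + 1, h⟩ : Fin n))
        ↔ ((a : ℕ) + (b : ℕ) + 1 = (m : ℕ)) := by
      rw [Fin.ext_iff]
      simp only [Fin.val_mk]
      omega
    simp only [key]
  · rw [dif_neg h, Pi.zero_apply, if_neg (by omega)]

/-- The coefficient `λ_{m-a}` when `a ≤ m`, else `0`. -/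
def coefF (lam : Fin n → ℂ) (a m : Fin n) : ℂ :=
  if h : (a : ℕ) ≤ (m : ℕ) then
    lam ⟨(m : ℕ) - (a : ℕ), lt_of_le_of_lt (Nat.sub_le _ _) m.isLt⟩ else 0

/-- `φ` has the derivation matrix with parameters `lam`. -/
def P (φ : (Fin n → ℂ) →ₗ[ℂ] (Fin n → ℂ)) (lam : Fin n → ℂ) : Prop :=
  ∀ a m : Fin n, φ (Pi.single a 1) m = (((a : ℕ) + 1 : ℕ) : ℂ) * coefF lam a m

lemma rhs_eval (lam : Fin n → ℂ) (a m : Fin n) :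
    ((((a : ℕ) + 1 : ℕ) : ℂ) • ∑ k : Fin n,
      (if h : (a : ℕ) ≤ (k : ℕ) then
          lam ⟨(k : ℕ) - (a : ℕ), lt_of_le_of_lt (Nat.sub_le _ _) k.isLt⟩
        else 0) • (Pi.single k (1 : ℂ) : Fin n → ℂ)) m
      = (((a : ℕ) + 1 : ℕ) : ℂ) * coefF lam a m := by
  simp only [Pi.smul_apply, Finset.sum_apply, smul_eq_mul]
  congr 1
  rw [Finset.sum_eq_single m]
  · rw [Pi.single_eq_same, mul_one]
    rfl
  · intro k _ hk
    rw [Pi.single_eq_of_ne (Ne.symm hk), mul_zero]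
  · simp

lemma deriv_P (φ : (Fin n → ℂ) →ₗ[ℂ] (Fin n → ℂ)) (hn : 0 < n)
    (h : ∀ x y, φ (mu0 n x y) = mu0 n (φ x) y + mu0 n x (φ y)) :
    P φ (φ (Pi.single (⟨0, hn⟩ : Fin n) 1)) := by
  set lam : Fin n → ℂ := φ (Pi.single (⟨0, hn⟩ : Fin n) 1) with hlam
  have key : ∀ v : ℕ, ∀ hv : v < n, ∀ m : Fin n,
      φ (Pi.single (⟨v, hv⟩ : Fin n) 1) m = ((v + 1 : ℕ) : ℂ) * coefF lam ⟨v, hv⟩ m := by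
    intro v
    induction v with
    | zero =>
      intro hv m
      rw [show (⟨0, hv⟩ : Fin n) = ⟨0, hn⟩ from rfl, ← hlam]
      simp only [coefF, Fin.val_mk]
      rw [dif_pos (Nat.zero_le _)]
      have hm : (⟨(m : ℕ) - 0, lt_of_le_of_lt (Nat.sub_le _ _) m.isLt⟩ : Fin n) = m :=
        Fin.ext (by simp)
      rw [hm]
      norm_num
    | succ v ih =>
      intro hv m
      have hv' : v < n := Nat.lt_of_succ_lt hv
      have hstep : Pi.single (⟨v + 1, hv⟩ : Fin n) (1 : ℂ) =
          mu0 n (Pi.single (⟨v, hv'⟩ : Fin n) 1) (Pi.single (⟨0, hn⟩ : Fin n) 1) := by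
        rw [mu0_single_single, dif_pos (by simp only [Fin.val_mk]; omega)]
        congr 1
      have ihm := fun (j : Fin n) => ih hv' j
      simp only [coefF, Fin.val_mk] at ihm
      rw [hstep, h, Pi.add_apply, mu0_single_right, mu0_single_left, ← hlam]
      simp only [coefF, Fin.val_mk]
      split_ifs with h1 h2 h2
      · rw [ihm]
        simp only [Fin.val_mk]
        rw [dif_pos (by omega)]
        simp only [show (m : ℕ) - (0 + 1) - v = (m : ℕ) - (v + 1) from by omega]
        push_cast
        ring
      · rw [ihm]
        simp only [Fin.val_mk]
        rw [dif_neg (by omega)]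
        ring
      · exfalso; omega
      · ring
  intro a m
  have := key (a : ℕ) a.isLt m
  simpa using this

lemma P_deriv (φ : (Fin n → ℂ) →ₗ[ℂ] (Fin n → ℂ)) (lam : Fin n → ℂ) (hP : P φ lam) :
    ∀ x y, φ (mu0 n x y) = mu0 n (φ x) y + mu0 n x (φ y) := by
  have key : ∀ a b : Fin n,
      φ (mu0 n (Pi.single a 1) (Pi.single b 1)) =
        mu0 n (φ (Pi.single a 1)) (Pi.single b 1)
          + mu0 n (Pi.single a 1) (φ (Pi.single b 1)) := by
    intro a b
    funext m
    rw [Pi.add_apply, mu0_single_right, mu0_single_left, mu0_single_single]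
    have hLHS : φ (if h : (a : ℕ) + (b : ℕ) + 1 < n then
        (Pi.single (⟨(a : ℕ) + (b : ℕ) + 1, h⟩ : Fin n) (1 : ℂ) : Fin n → ℂ) else 0) m =
        if h : (a : ℕ) + (b : ℕ) + 1 < n then
          (((a : ℕ) + (b : ℕ) + 1 + 1 : ℕ) : ℂ)
            * coefF lam ⟨(a : ℕ) + (b : ℕ) + 1, h⟩ m
        else 0 := by
      split_ifs with h
      · rw [hP ⟨(a : ℕ) + (b : ℕ) + 1, h⟩ m]
      · simp
    rw [hLHS]
    by_cases hb1 : (b : ℕ) + 1 ≤ (m : ℕ)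
    · rw [if_pos hb1, hP a ⟨(m : ℕ) - ((b : ℕ) + 1), lt_of_le_of_lt (Nat.sub_le _ _) m.isLt⟩]
      by_cases ha1 : (a : ℕ) + 1 ≤ (m : ℕ)
      · rw [if_pos ha1, hP b ⟨(m : ℕ) - ((a : ℕ) + 1), lt_of_le_of_lt (Nat.sub_le _ _) m.isLt⟩]
        simp only [coefF, Fin.val_mk]
        by_cases hc : (a : ℕ) + (b : ℕ) + 1 ≤ (m : ℕ)
        · have hmn : (a : ℕ) + (b : ℕ) + 1 < n := lt_of_le_of_lt hc m.isLt
          rw [dif_pos (show (a : ℕ) ≤ (m : ℕ) - ((b : ℕ) + 1) from by omega),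
            dif_pos (show (b : ℕ) ≤ (m : ℕ) - ((a : ℕ) + 1) from by omega),
            dif_pos hmn, dif_pos hc]
          simp only
            [show (m : ℕ) - ((b : ℕ) + 1) - (a : ℕ) = (m : ℕ) - ((a : ℕ) + (b : ℕ) + 1)
              from by omega,
             show (m : ℕ) - ((a : ℕ) + 1) - (b : ℕ) = (m : ℕ) - ((a : ℕ) + (b : ℕ) + 1)
              from by omega]
          push_cast
          ring
        · rw [dif_neg (show ¬(a : ℕ) ≤ (m : ℕ) - ((b : ℕ) + 1) from by omega),
            dif_neg (show ¬(b : ℕ) ≤ (m : ℕ) - ((a : ℕ) + 1) from by omega)]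
          split_ifs <;> first | (exfalso; omega) | ring1
      · rw [if_neg ha1]
        simp only [coefF, Fin.val_mk]
        rw [dif_neg (show ¬(a : ℕ) ≤ (m : ℕ) - ((b : ℕ) + 1) from by omega)]
        split_ifs <;> first | (exfalso; omega) | ring1
    · rw [if_neg hb1]
      by_cases ha1 : (a : ℕ) + 1 ≤ (m : ℕ)
      · rw [if_pos ha1, hP b ⟨(m : ℕ) - ((a : ℕ) + 1), lt_of_le_of_lt (Nat.sub_le _ _) m.isLt⟩]
        simp only [coefF, Fin.val_mk]
        rw [dif_neg (show ¬(b : ℕ) ≤ (m : ℕ) - ((a : ℕ) + 1) from by omega)]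
        split_ifs <;> first | (exfalso; omega) | ring1
      · rw [if_neg ha1]
        simp only [coefF, Fin.val_mk]
        split_ifs <;> first | (exfalso; omega) | ring1
  have main : (mu0 n).compr₂ φ = (mu0 n).comp φ + (mu0 n).compl₂ φ := by
    apply LinearMap.ext_basis (Pi.basisFun ℂ (Fin n)) (Pi.basisFun ℂ (Fin n))
    intro i j
    simp only [LinearMap.compr₂_apply, LinearMap.add_apply, LinearMap.comp_apply,
      LinearMap.compl₂_apply, Pi.basisFun_apply]
    exact key i j
  intro x y
  have := LinearMap.congr_fun (LinearMap.congr_fun main x) y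
  simpa only [LinearMap.compr₂_apply, LinearMap.add_apply, LinearMap.comp_apply,
    LinearMap.compl₂_apply] using this

end Stmt10Aux

/-- A linear endomorphism `φ` of `μ₀ⁿ` is a derivation iff there are
`λ₁,…,λₙ ∈ ℂ` with `φ(e_i) = i • ∑_{k=i}^{n} λ_{k−i+1} e_k`; consequently the
Lie algebra of derivations of `μ₀ⁿ` has dimension `n`. -/
theorem stmt10 (n : ℕ) (hn : 1 ≤ n) :
    (∀ φ : (Fin n → ℂ) →ₗ[ℂ] (Fin n → ℂ),
      (∀ x y, φ (mu0 n x y) = mu0 n (φ x) y + mu0 n x (φ y)) ↔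
      ∃ lam : Fin n → ℂ, ∀ a : Fin n,
        φ (Pi.single a 1) = (((a : ℕ) + 1 : ℕ) : ℂ) •
          ∑ k : Fin n,
            (if h : (a : ℕ) ≤ (k : ℕ) then
                lam ⟨(k : ℕ) - (a : ℕ), lt_of_le_of_lt (Nat.sub_le _ _) k.isLt⟩
              else 0) • (Pi.single k (1 : ℂ) : Fin n → ℂ)) ∧
    Module.finrank ℂ ↥(derivs (mu0 n) 0) = n := by
  classical
  have hn0 : 0 < n := hn
  constructor
  · intro φ
    constructor
    · intro h
      refine ⟨φ (Pi.single (⟨0, hn0⟩ : Fin n) 1), fun a => ?_⟩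
      have hP := Stmt10Aux.deriv_P φ hn0 h
      funext m
      rw [Stmt10Aux.rhs_eval]
      exact hP a m
    · rintro ⟨lam, hlam⟩
      apply Stmt10Aux.P_deriv φ lam
      intro a m
      rw [← Stmt10Aux.rhs_eval lam a m, hlam a]
  · -- dimension count
    have mem_iff : ∀ φ : (Fin n → ℂ) →ₗ[ℂ] (Fin n → ℂ),
        φ ∈ derivs (mu0 n) 0 ↔
          ∀ x y, φ (mu0 n x y) = mu0 n (φ x) y + mu0 n x (φ y) := by
      intro φ
      constructor
      · intro h; exact h.1
      · intro h; exact ⟨h, fun x y => by simp⟩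
    let ev : ↥(derivs (mu0 n) 0) →ₗ[ℂ] (Fin n → ℂ) :=
      (LinearMap.applyₗ (Pi.single (⟨0, hn0⟩ : Fin n) 1)).comp (Submodule.subtype _)
    have ev_apply : ∀ φ : ↥(derivs (mu0 n) 0),
        ev φ = (φ : (Fin n → ℂ) →ₗ[ℂ] (Fin n → ℂ)) (Pi.single (⟨0, hn0⟩ : Fin n) 1) :=
      fun φ => rfl
    have hinj : Function.Injective ev := by
      rintro ⟨φ, hφ⟩ ⟨ψ, hψ⟩ hev
      have h1 := Stmt10Aux.deriv_P φ hn0 ((mem_iff φ).1 hφ)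
      have h2 := Stmt10Aux.deriv_P ψ hn0 ((mem_iff ψ).1 hψ)
      have hev' : φ (Pi.single (⟨0, hn0⟩ : Fin n) 1) = ψ (Pi.single (⟨0, hn0⟩ : Fin n) 1) := by
        rw [← ev_apply ⟨φ, hφ⟩, ← ev_apply ⟨ψ, hψ⟩, hev]
      apply Subtype.ext
      apply LinearMap.pi_ext
      intro i x
      have hone : φ (Pi.single i 1) = ψ (Pi.single i 1) := by
        funext m
        rw [h1 i m, h2 i m, hev']
      have hsx : (Pi.single i x : Fin n → ℂ) = x • (Pi.single i 1 : Fin n → ℂ) := by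
        funext j
        simp only [Pi.smul_apply, smul_eq_mul, Pi.single_apply, mul_ite, mul_one, mul_zero]
      rw [hsx, map_smul, map_smul, hone]
    have hsurj : Function.Surjective ev := by
      intro lam
      set M : Matrix (Fin n) (Fin n) ℂ :=
        Matrix.of fun k a => (((a : ℕ) + 1 : ℕ) : ℂ) * Stmt10Aux.coefF lam a k with hM
      have hPM : Stmt10Aux.P M.mulVecLin lam := by
        intro a m
        show (M.mulVecLin (Pi.single a 1)) m = _
        rw [Matrix.mulVecLin_apply, Matrix.mulVec_single]
        simp only [hM, Pi.smul_apply, MulOpposite.op_one, one_smul, Matrix.col_apply, Matrix.of_apply, mul_one]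
      refine ⟨⟨M.mulVecLin, (mem_iff _).2 (Stmt10Aux.P_deriv _ lam hPM)⟩, ?_⟩
      rw [ev_apply]
      funext m
      show M.mulVecLin (Pi.single (⟨0, hn0⟩ : Fin n) 1) m = lam m
      rw [hPM ⟨0, hn0⟩ m]
      simp only [Stmt10Aux.coefF, Fin.val_mk]
      rw [dif_pos (Nat.zero_le _)]
      have hm : (⟨(m : ℕ) - 0, lt_of_le_of_lt (Nat.sub_le _ _) m.isLt⟩ : Fin n) = m :=
        Fin.ext (by simp)
      rw [hm]
      norm_num
    have hrank : Module.finrank ℂ ↥(derivs (mu0 n) 0) = Module.finrank ℂ (Fin n → ℂ) :=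
      (LinearEquiv.ofBijective ev ⟨hinj, hsurj⟩).finrank_eq
    rw [hrank, Module.finrank_fin_fun]
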